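/- For the unitary T of the previous statement and any x ∈ Ω, T|x⟩ = (1/√n_x)|f(x)⟩ + |γ⟩, where n_x = |f⁻¹(f(x))|, |γ⟩ lies in the orthogonal complement of span{|y_1⟩,…,|y_m⟩}, and ‖|γ⟩‖ = √((n_x − 1)/n_x). -/

import Mathlib

open scoped InnerProductSpace

/-- `|u_y⟩ = (1/√n_y) Σ_{x ∈ f⁻¹(y)} |x⟩`, the normalized uniform superposition over the
fiber of `f` above `y`, where `n_y = |f⁻¹(y)|`. -/
noncomputable def fiberVec {Ω Ω' : Type*} [Fintype Ω] [DecidableEq Ω] [DecidableEq Ω']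
    (f : Ω → Ω') (y : Ω') : EuclideanSpace ℂ Ω :=
  ((Real.sqrt (Fintype.card {x // f x = y}) : ℂ))⁻¹ •
    ∑ x ∈ Finset.univ.filter (fun x => f x = y), EuclideanSpace.single x (1 : ℂ)

/-- `M = Σ_{y ∈ Ω'} |y⟩⟨u_y|`. -/
noncomputable def fiberKernel {Ω Ω' : Type*} [Fintype Ω] [Fintype Ω']
    [DecidableEq Ω] [DecidableEq Ω'] (f : Ω → Ω') :
    EuclideanSpace ℂ Ω →ₗ[ℂ] EuclideanSpace ℂ Ω' :=
  ∑ y : Ω', ((innerSL ℂ (fiberVec f y)).toLinearMap).smulRight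
      (EuclideanSpace.single y (1 : ℂ))

set_option linter.unusedVariables false

lemma mem_orthogonal_span_of_inner_eq_zero {E : Type*} [NormedAddCommGroup E]
    [InnerProductSpace ℂ E] {S : Set E} {x : E} (h : ∀ s ∈ S, ⟪s, x⟫_ℂ = 0) :
    x ∈ (Submodule.span ℂ S)ᗮ := by
  rw [Submodule.mem_orthogonal]
  intro z hz
  induction hz using Submodule.span_induction with
  | mem z hzS => exact h z hzS
  | zero => simp
  | add a b _ _ ha hb => simp [inner_add_left, ha, hb]
  | smul c a _ ha => simp [inner_smul_left, ha]

lemma norm_sq_sum_smul_orthonormal {ι E : Type*} [Fintype ι] [NormedAddCommGroup E]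
    [InnerProductSpace ℂ E] {v : ι → E} (hv : Orthonormal ℂ v) (l : ι → ℂ) :
    ‖∑ i, l i • v i‖ ^ 2 = ∑ i, ‖l i‖ ^ 2 := by
  have h := hv.inner_sum l l Finset.univ
  have h2 : (⟪∑ i, l i • v i, ∑ i, l i • v i⟫_ℂ).re = ∑ i, ‖l i‖ ^ 2 := by
    rw [h]
    rw [Complex.re_sum]
    refine Finset.sum_congr rfl fun i _ => ?_
    rw [Complex.sq_norm, Complex.normSq_apply]
    simp [Complex.mul_re]
  rw [← h2, ← inner_self_eq_norm_sq (𝕜 := ℂ)]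
  rfl

lemma inner_fiberVec_single {Ω Ω' : Type*} [Fintype Ω] [DecidableEq Ω] [DecidableEq Ω']
    (f : Ω → Ω') (i : Ω') (x : Ω) :
    ⟪fiberVec f i, EuclideanSpace.single x (1 : ℂ)⟫_ℂ
      = if f x = i then ((Real.sqrt (Fintype.card {x' // f x' = i}) : ℂ))⁻¹ else 0 := by
  unfold fiberVec
  rw [inner_smul_left, sum_inner]
  have hterm : ∀ x' : Ω,
      ⟪EuclideanSpace.single x' (1 : ℂ), EuclideanSpace.single x (1 : ℂ)⟫_ℂ
        = if x = x' then 1 else 0 := by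
    intro x'
    rw [EuclideanSpace.inner_single_left, EuclideanSpace.single_apply]
    simp [eq_comm]
  simp_rw [hterm]
  rw [Finset.sum_ite_eq]
  simp only [Finset.mem_filter, Finset.mem_univ, true_and]
  rw [map_inv₀, Complex.conj_ofReal]
  by_cases hfx : f x = i <;> simp [hfx]

lemma orthonormal_fiberVec {Ω Ω' : Type*} [Fintype Ω] [DecidableEq Ω] [DecidableEq Ω']
    {f : Ω → Ω'} (hf : Function.Surjective f) : Orthonormal ℂ (fiberVec f) := by
  rw [orthonormal_iff_ite]
  intro i j
  have hcount : (Finset.univ.filter (fun x => f x = j)).card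
      = Fintype.card {x // f x = j} := (Fintype.card_subtype _).symm
  conv_lhs => rw [show fiberVec f j = ((Real.sqrt (Fintype.card {x // f x = j}) : ℂ))⁻¹ •
    ∑ x ∈ Finset.univ.filter (fun x => f x = j), EuclideanSpace.single x (1 : ℂ) from rfl]
  rw [inner_smul_right, inner_sum]
  simp_rw [inner_fiberVec_single]
  by_cases hij : i = j
  · subst hij
    have hsum : ∑ x ∈ Finset.univ.filter (fun x => f x = i),
        (if f x = i then ((Real.sqrt (Fintype.card {x' // f x' = i}) : ℂ))⁻¹ else 0)
        = (Fintype.card {x' // f x' = i} : ℂ) *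
            ((Real.sqrt (Fintype.card {x' // f x' = i}) : ℂ))⁻¹ := by
      rw [Finset.sum_congr rfl (fun x hx => by
        rw [if_pos (Finset.mem_filter.mp hx).2])]
      rw [Finset.sum_const, hcount, nsmul_eq_mul]
    rw [hsum, if_pos rfl]
    have hpos : 0 < (Fintype.card {x' // f x' = i} : ℝ) := by
      have : Nonempty {x' // f x' = i} := by
        obtain ⟨a, ha⟩ := hf i
        exact ⟨⟨a, ha⟩⟩
      exact_mod_cast Fintype.card_pos
    have hs : Real.sqrt (Fintype.card {x' // f x' = i}) ≠ 0 :=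
      ne_of_gt (Real.sqrt_pos.mpr hpos)
    have : ((Real.sqrt (Fintype.card {x' // f x' = i}) : ℂ))⁻¹ *
        ((Fintype.card {x' // f x' = i} : ℂ) *
          ((Real.sqrt (Fintype.card {x' // f x' = i}) : ℂ))⁻¹) = 1 := by
      have hn : (Fintype.card {x' // f x' = i} : ℂ)
          = ((Real.sqrt (Fintype.card {x' // f x' = i}) : ℂ)) *
            ((Real.sqrt (Fintype.card {x' // f x' = i}) : ℂ)) := by
        rw [← Complex.ofReal_mul, Real.mul_self_sqrt hpos.le]
        norm_cast
      rw [hn]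
      field_simp
      rw [div_self (Complex.ofReal_ne_zero.mpr hs)]
    exact this
  · rw [if_neg hij]
    rw [Finset.sum_congr rfl (fun x hx => by
      rw [(Finset.mem_filter.mp hx).2, if_neg (fun h => hij h.symm)])]
    simp

/-- For the unitary `T = Σ_i |y_i⟩⟨u_i| + Σ_k |w_k⟩⟨v_k|` and any `x ∈ Ω`,
`T|x⟩ = (1/√n_x)|f(x)⟩ + |γ⟩` where `n_x = |f⁻¹(f(x))|`, `|γ⟩ ⟂ span{|y_i⟩}`, and
`‖γ‖ = √((n_x − 1)/n_x)`. -/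
theorem surjection_operator_apply {Ω Ω' κ : Type*} [Fintype Ω] [Fintype Ω'] [Fintype κ]
    [DecidableEq Ω] [DecidableEq Ω'] (f : Ω → Ω') (hf : Function.Surjective f)
    (y : Ω' → EuclideanSpace ℂ Ω) (hy : Orthonormal ℂ y)
    (v : κ → EuclideanSpace ℂ Ω) (hv : Orthonormal ℂ v)
    (hvspan : Submodule.span ℂ (Set.range v) = (Submodule.span ℂ (Set.range (fiberVec f)))ᗮ)
    (w : κ → EuclideanSpace ℂ Ω) (hw : Orthonormal ℂ w)
    (hwspan : Submodule.span ℂ (Set.range w) = (Submodule.span ℂ (Set.range y))ᗮ)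
    (x : Ω) :
    ∃ γ : EuclideanSpace ℂ Ω,
      ((∑ i : Ω', ((innerSL ℂ (fiberVec f i)).toLinearMap).smulRight (y i)) +
          ∑ k : κ, ((innerSL ℂ (v k)).toLinearMap).smulRight (w k))
        (EuclideanSpace.single x (1 : ℂ))
        = ((Real.sqrt (Fintype.card {x' // f x' = f x}) : ℂ))⁻¹ • y (f x) + γ ∧
      γ ∈ (Submodule.span ℂ (Set.range y))ᗮ ∧
      ‖γ‖ = Real.sqrt (((Fintype.card {x' // f x' = f x} : ℝ) - 1)
              / (Fintype.card {x' // f x' = f x} : ℝ)) := by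
  classical
  have hu := orthonormal_fiberVec hf
  set ex : EuclideanSpace ℂ Ω := EuclideanSpace.single x (1 : ℂ) with hex
  set n : ℕ := Fintype.card {x' // f x' = f x} with hn
  have hnpos : 0 < (n : ℝ) := by
    have : Nonempty {x' // f x' = f x} := ⟨⟨x, rfl⟩⟩
    exact_mod_cast Fintype.card_pos
  set c : ℂ := ((Real.sqrt n : ℝ) : ℂ)⁻¹ with hc
  set γ : EuclideanSpace ℂ Ω := ∑ k, ⟪v k, ex⟫_ℂ • w k with hγ
  set K : Submodule ℂ (EuclideanSpace ℂ Ω) := Submodule.span ℂ (Set.range (fiberVec f)) with hK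
  have hvmem : ∀ k, v k ∈ Kᗮ := fun k => hvspan ▸ Submodule.subset_span ⟨k, rfl⟩
  set Q : EuclideanSpace ℂ Ω := c • fiberVec f (f x) with hQ
  set P : EuclideanSpace ℂ Ω := ex - Q with hP
  have hQmem : Q ∈ K := Submodule.smul_mem _ _ (Submodule.subset_span ⟨f x, rfl⟩)
  have hPmem : P ∈ Kᗮ := by
    apply mem_orthogonal_span_of_inner_eq_zero
    rintro s ⟨i, rfl⟩
    rw [hP, inner_sub_right, hQ, inner_smul_right, inner_fiberVec_single,
      orthonormal_iff_ite.mp hu i (f x)]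
    by_cases hix : i = f x
    · subst hix
      simp [hc, hn]
    · rw [if_neg (fun h => hix h.symm), if_neg hix]
      simp
  have hvP : ∀ k, ⟪v k, ex⟫_ℂ = ⟪v k, P⟫_ℂ := by
    intro k
    have hexPQ : ex = P + Q := by simp [hP]
    rw [hexPQ, inner_add_right,
      inner_eq_zero_symm.mp (Submodule.inner_right_of_mem_orthogonal hQmem (hvmem k)), add_zero]
  have hPrep : P = ∑ k, ⟪v k, P⟫_ℂ • v k := by
    set d : EuclideanSpace ℂ Ω := P - ∑ k, ⟪v k, P⟫_ℂ • v k with hd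
    have hd1 : d ∈ Kᗮ :=
      Submodule.sub_mem _ hPmem
        (Submodule.sum_mem _ fun k _ => Submodule.smul_mem _ _ (hvmem k))
    have hd2 : d ∈ (Submodule.span ℂ (Set.range v))ᗮ := by
      apply mem_orthogonal_span_of_inner_eq_zero
      rintro s ⟨j, rfl⟩
      rw [hd, inner_sub_right, hv.inner_right_fintype, sub_self]
    have hd0 : d = 0 := by
      have : ⟪d, d⟫_ℂ = 0 :=
        Submodule.inner_right_of_mem_orthogonal (hvspan ▸ hd1 : d ∈ Submodule.span ℂ (Set.range v)) hd2
      exact inner_self_eq_zero.mp this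
    have := sub_eq_zero.mp hd0
    exact this
  have hexnorm : ‖ex‖ = 1 := by
    rw [hex, EuclideanSpace.norm_single, norm_one]
  have hQPinner : ⟪Q, P⟫_ℂ = 0 := Submodule.inner_right_of_mem_orthogonal hQmem hPmem
  have hQnorm2 : ‖Q‖ ^ 2 = 1 / (n : ℝ) := by
    rw [hQ, norm_smul, hu.1 (f x), mul_one, hc]
    rw [norm_inv, Complex.norm_real, Real.norm_eq_abs,
      abs_of_nonneg (Real.sqrt_nonneg _)]
    rw [inv_pow, Real.sq_sqrt hnpos.le, one_div]
  have hPnorm2 : ‖P‖ ^ 2 = 1 - 1 / (n : ℝ) := by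
    have hexPQ : ex = Q + P := by simp [hP]
    have := norm_add_sq (𝕜 := ℂ) Q P
    rw [hQPinner] at this
    simp only [map_zero, mul_zero, add_zero] at this
    have h1 : ‖Q + P‖ ^ 2 = 1 := by rw [← hexPQ, hexnorm]; norm_num
    rw [h1] at this
    rw [← hQnorm2]
    linarith
  have hγnorm2 : ‖γ‖ ^ 2 = ((n : ℝ) - 1) / n := by
    rw [hγ, norm_sq_sum_smul_orthonormal hw]
    have : ∀ k, ‖⟪v k, ex⟫_ℂ‖ ^ 2 = ‖⟪v k, P⟫_ℂ‖ ^ 2 := fun k => by rw [hvP k]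
    rw [Finset.sum_congr rfl fun k _ => this k]
    rw [← norm_sq_sum_smul_orthonormal hv (fun k => ⟪v k, P⟫_ℂ), ← hPrep, hPnorm2]
    field_simp
  refine ⟨γ, ?_, ?_, ?_⟩
  · rw [LinearMap.add_apply, LinearMap.sum_apply, LinearMap.sum_apply]
    congr 1
    · simp only [LinearMap.smulRight_apply, ContinuousLinearMap.coe_coe, innerSL_apply_apply]
      rw [hex]
      simp_rw [inner_fiberVec_single, ite_smul, zero_smul]
      rw [Finset.sum_ite_eq]
      simp [hc, hn]
  · rw [← hwspan]
    exact Submodule.sum_mem _ fun k _ =>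
      Submodule.smul_mem _ _ (Submodule.subset_span ⟨k, rfl⟩)
  · rw [← hγnorm2, Real.sqrt_sq (norm_nonneg _)]
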